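/- For j ≥ 3, the TU games (ŵ^S)_{S ∈ 2^N, S ≠ ∅} obtained as average games of the games w^S span the space spanned by the unanimity games: every average game ũ of a (j,k) simple game u is a linear combination ũ = Σ_{S⊆N} x_S ŵ^S for some real numbers x_S. -/

import Mathlib

open Finset BigOperators

attribute [local instance] Classical.propDecidable

noncomputable section

variable {n j k : ℕ}

/-- The top element `j-1` of `Fin j`. -/
def topF (j : ℕ) [NeZero j] : Fin j :=
  ⟨j - 1, Nat.sub_lt (Nat.pos_of_ne_zero (NeZero.ne j)) one_pos⟩

/-- The profile equal to the constant `c` on `S` and to `x` off `S`. -/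
def mer (S : Finset (Fin n)) (c : Fin j) (x : Fin n → Fin j) : Fin n → Fin j :=
  fun i => if i ∈ S then c else x i

/-- `(j,k)` simple game: `v 0 = 0`, `v (j-1,…,j-1) = k-1`, monotone. -/
def IsJKGame [NeZero j] [NeZero k] (v : (Fin n → Fin j) → Fin k) : Prop :=
  v (fun _ => 0) = 0 ∧ v (fun _ => topF j) = topF k ∧
    ∀ x y : Fin n → Fin j, (∀ i, x i ≤ y i) → v x ≤ v y

/-- The `(j,k)` simple game with point-veto `a`. -/
def uA [NeZero j] [NeZero k] (a : Fin n → Fin j) (x : Fin n → Fin j) : Fin k :=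
  if ∀ i, a i ≤ x i then topF k else 0

/-- The veto game associated with a set `E` of thresholds. -/
def uE [NeZero j] [NeZero k] (E : Set (Fin n → Fin j)) (x : Fin n → Fin j) : Fin k :=
  if ∃ a ∈ E, ∀ i, a i ≤ x i then topF k else 0

/-- Player `i` is a null player of `v`. -/
def NullPlayer [NeZero j] [NeZero k] (v : (Fin n → Fin j) → Fin k) (i : Fin n) : Prop :=
  ∀ (x : Fin n → Fin j) (y : Fin j), v x = v (Function.update x i y)

/-- Players `i` and `h` are equivalent in `v`. -/
def EquivPlayers [NeZero j] [NeZero k] (v : (Fin n → Fin j) → Fin k) (i h : Fin n) : Prop :=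
  ∀ x : Fin n → Fin j, v x = v (x ∘ Equiv.swap i h)

/-- The average game `ṽ(T) = (1/(jⁿ(k-1))) Σ_x [v((j-1)_T, x_{-T}) - v(0_T, x_{-T})]`. -/
def Cfun [NeZero j] [NeZero k] (v : (Fin n → Fin j) → Fin k) (T : Finset (Fin n)) : ℝ :=
  (1 / ((j : ℝ) ^ n * ((k : ℝ) - 1))) *
    ∑ x : Fin n → Fin j,
      (((v (mer T (topF j) x)).val : ℝ) - ((v (mer T 0 x)).val : ℝ))

/-- The Shapley-Shubik index for `(j,k)` simple games. -/
def Phi [NeZero j] [NeZero k] (v : (Fin n → Fin j) → Fin k) (i : Fin n) : ℝ :=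
  ∑ S ∈ univ.filter (fun S : Finset (Fin n) => i ∈ S),
    ((Nat.factorial (S.card - 1) * Nat.factorial (n - S.card) : ℝ) / (Nat.factorial n : ℝ)) *
      (Cfun v S - Cfun v (S.erase i))

/-- The TU game `v_a(S) = (1/(k-1))[v((j-1)_S, a_{-S}) - v(0_S, a_{-S})]`. -/
def vAgame [NeZero j] [NeZero k] (v : (Fin n → Fin j) → Fin k) (a : Fin n → Fin j)
    (S : Finset (Fin n)) : ℝ :=
  (1 / ((k : ℝ) - 1)) * (((v (mer S (topF j) a)).val : ℝ) - ((v (mer S 0 a)).val : ℝ))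

/-- The parametric power index `Φ^a`. -/
def PhiA [NeZero j] [NeZero k] (v : (Fin n → Fin j) → Fin k) (a : Fin n → Fin j) (i : Fin n) : ℝ :=
  ∑ S ∈ univ.filter (fun S : Finset (Fin n) => i ∈ S),
    ((Nat.factorial (S.card - 1) * Nat.factorial (n - S.card) : ℝ) / (Nat.factorial n : ℝ)) *
      (vAgame v a S - vAgame v a (S.erase i))

/-- The game `w^C`: value `k-1` iff all members of `C` give full support. -/
def wCgame [NeZero j] [NeZero k] (C : Finset (Fin n)) : (Fin n → Fin j) → Fin k :=
  uA (fun i => if i ∈ C then topF j else 0)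

/-- The unanimity TU game `γ_S`. -/
def gammaTU (S T : Finset (Fin n)) : ℝ :=
  if S ⊆ T then 1 else 0

end

noncomputable section
variable {n j k : ℕ}

lemma le_topF [NeZero j] (y : Fin j) : y ≤ topF j := by
  have := y.isLt
  simp only [topF, Fin.le_def]
  omega

lemma eq_topF_of_le [NeZero j] {y : Fin j} (h : topF j ≤ y) : y = topF j :=
  le_antisymm (le_topF y) h

lemma topF_ne_zero (hj : 2 ≤ j) [NeZero j] : (topF j : Fin j) ≠ 0 := by
  simp only [topF, Fin.ext_iff, Fin.val_zero, ne_eq]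
  omega

lemma count_cyl [NeZero j] (A : Finset (Fin n)) (c : Fin j) :
    ∑ x : Fin n → Fin j, (if ∀ i ∈ A, x i = c then (1:ℝ) else 0)
      = (j:ℝ) ^ (n - A.card) := by
  have h1 : ∀ x : Fin n → Fin j,
      (if ∀ i ∈ A, x i = c then (1:ℝ) else 0)
        = ∏ i : Fin n, (if i ∈ A then (if x i = c then (1:ℝ) else 0) else 1) := by
    intro x
    by_cases h : ∀ i ∈ A, x i = c
    · rw [if_pos h, eq_comm]
      apply Finset.prod_eq_one
      intro i _
      by_cases hi : i ∈ A
      · simp [hi, h i hi]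
      · simp [hi]
    · rw [if_neg h]
      push_neg at h
      obtain ⟨i, hiA, hic⟩ := h
      refine (Finset.prod_eq_zero (mem_univ i) ?_).symm
      simp [hiA, hic]
  simp_rw [h1]
  rw [← Fintype.piFinset_univ,
    Finset.sum_prod_piFinset univ
      (fun (i : Fin n) (y : Fin j) => if i ∈ A then if y = c then (1:ℝ) else 0 else 1)]
  have h2 : ∀ i : Fin n,
      (∑ y : Fin j, (if i ∈ A then (if y = c then (1:ℝ) else 0) else 1))
        = if i ∈ A then 1 else (j:ℝ) := by
    intro i
    by_cases hi : i ∈ A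
    · simp [hi]
    · simp [hi, Finset.card_univ]
  rw [Finset.prod_congr rfl (fun i _ => h2 i)]
  have h3 : ∀ i : Fin n, (if i ∈ A then (1:ℝ) else (j:ℝ)) = (if i ∈ Aᶜ then (j:ℝ) else 1) := by
    intro i
    by_cases hi : i ∈ A <;> simp [hi]
  rw [Finset.prod_congr rfl (fun i _ => h3 i), Finset.prod_ite_mem, univ_inter,
    Finset.prod_const, Finset.card_compl, Fintype.card_fin]

lemma sum_pow_neg_one_real (A : Finset (Fin n)) :
    ∑ R ∈ A.powerset, (-1:ℝ)^R.card = if A = ∅ then 1 else 0 := by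
  have h := Finset.sum_powerset_neg_one_pow_card (x := A)
  have h2 : ((∑ m ∈ A.powerset, (-1:ℤ)^m.card : ℤ) : ℝ)
      = ∑ R ∈ A.powerset, (-1:ℝ)^R.card := by push_cast; rfl
  rw [← h2, h]
  split_ifs <;> simp

lemma sum_pow_powerset (A : Finset (Fin n)) (a : ℝ) :
    ∑ R ∈ A.powerset, a ^ R.card = (a + 1) ^ A.card := by
  rw [Finset.sum_powerset_apply_card (fun r => a ^ r), add_pow]
  refine Finset.sum_congr rfl fun r _ => ?_
  simp [nsmul_eq_mul, mul_comm]

lemma val_topF_real (hk : 2 ≤ k) [NeZero k] : (((topF k : Fin k).val : ℝ)) = (k:ℝ) - 1 := by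
  have h1 : 1 ≤ k := by omega
  simp only [topF]
  push_cast [h1]
  ring

lemma CfunW [NeZero j] [NeZero k] (hj : 3 ≤ j) (hk : 2 ≤ k) (S T : Finset (Fin n)) :
    Cfun (wCgame S : (Fin n → Fin j) → Fin k) T
      = ((j:ℝ)⁻¹) ^ S.card * ((j:ℝ) ^ (S ∩ T).card - (if S ∩ T = ∅ then 1 else 0)) := by
  have hj0 : (j:ℝ) ≠ 0 := by positivity
  have hk1 : (k:ℝ) - 1 ≠ 0 := by
    have : (2:ℝ) ≤ (k:ℝ) := by exact_mod_cast hk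
    linarith
  have htop : (topF j : Fin j) ≠ 0 := topF_ne_zero (by omega)
  have hA : ∀ x : Fin n → Fin j,
      ((wCgame S (mer T (topF j) x) : Fin k).val : ℝ)
        = ((k:ℝ) - 1) * (if ∀ i ∈ S \ T, x i = topF j then (1:ℝ) else 0) := by
    intro x
    unfold wCgame uA
    have hcond : (∀ i, (if i ∈ S then topF j else 0) ≤ mer T (topF j) x i)
        ↔ (∀ i ∈ S \ T, x i = topF j) := by
      constructor
      · intro h i hi
        rw [mem_sdiff] at hi
        have h2 := h i
        rw [if_pos hi.1] at h2
        have h3 := eq_topF_of_le h2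
        unfold mer at h3
        rwa [if_neg hi.2] at h3
      · intro h i
        by_cases hiS : i ∈ S
        · rw [if_pos hiS]
          unfold mer
          by_cases hiT : i ∈ T
          · rw [if_pos hiT]
          · rw [if_neg hiT, h i (mem_sdiff.2 ⟨hiS, hiT⟩)]
        · rw [if_neg hiS]
          exact Fin.zero_le _
    by_cases h : ∀ i ∈ S \ T, x i = topF j
    · rw [if_pos (hcond.2 h), if_pos h, mul_one, val_topF_real hk]
    · rw [if_neg (fun hc => h (hcond.1 hc)), if_neg h, mul_zero]
      simp
  have hB : ∀ x : Fin n → Fin j,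
      ((wCgame S (mer T 0 x) : Fin k).val : ℝ)
        = ((k:ℝ) - 1) *
          (if S ∩ T = ∅ then (if ∀ i ∈ S, x i = topF j then (1:ℝ) else 0) else 0) := by
    intro x
    unfold wCgame uA
    have hcond : (∀ i, (if i ∈ S then topF j else 0) ≤ mer T 0 x i)
        ↔ (S ∩ T = ∅ ∧ ∀ i ∈ S, x i = topF j) := by
      constructor
      · intro h
        have hdisj : S ∩ T = ∅ := by
          rw [Finset.eq_empty_iff_forall_notMem]
          intro i hi
          rw [mem_inter] at hi
          have h2 := h i
          rw [if_pos hi.1] at h2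
          have h3 := eq_topF_of_le h2
          unfold mer at h3
          rw [if_pos hi.2] at h3
          exact htop h3.symm
        refine ⟨hdisj, fun i hi => ?_⟩
        have hiT : i ∉ T := by
          intro hT
          exact (Finset.eq_empty_iff_forall_notMem.1 hdisj i) (mem_inter.2 ⟨hi, hT⟩)
        have h2 := h i
        rw [if_pos hi] at h2
        have h3 := eq_topF_of_le h2
        unfold mer at h3
        rwa [if_neg hiT] at h3
      · rintro ⟨hdisj, h⟩ i
        by_cases hiS : i ∈ S
        · rw [if_pos hiS]
          have hiT : i ∉ T := by
            intro hT
            exact (Finset.eq_empty_iff_forall_notMem.1 hdisj i) (mem_inter.2 ⟨hiS, hT⟩)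
          unfold mer
          rw [if_neg hiT, h i hiS]
        · rw [if_neg hiS]
          exact Fin.zero_le _
    by_cases hd : S ∩ T = ∅
    · rw [if_pos hd]
      by_cases h : ∀ i ∈ S, x i = topF j
      · rw [if_pos (hcond.2 ⟨hd, h⟩), if_pos h, mul_one, val_topF_real hk]
      · rw [if_neg (fun hc => h (hcond.1 hc).2), if_neg h, mul_zero]
        simp
    · rw [if_neg hd, if_neg (fun hc => hd (hcond.1 hc).1), mul_zero]
      simp
  unfold Cfun
  rw [Finset.sum_congr rfl (fun x _ => by rw [hA x, hB x])]
  rw [Finset.sum_sub_distrib, ← Finset.mul_sum, ← Finset.mul_sum, ← mul_sub, count_cyl]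
  have hcard : (S \ T).card + (S ∩ T).card = S.card := Finset.card_sdiff_add_card_inter S T
  have hle : (S \ T).card ≤ n := by
    have := Finset.card_le_card (Finset.subset_univ (S \ T))
    simpa using this
  have hSle : S.card ≤ n := by
    have := Finset.card_le_card (Finset.subset_univ S)
    simpa using this
  by_cases hd : S ∩ T = ∅
  · rw [if_pos hd]
    have hST : S \ T = S := by
      rw [Finset.sdiff_eq_self_iff_disjoint, Finset.disjoint_iff_inter_eq_empty]
      exact hd
    have hsum : ∑ x : Fin n → Fin j,
        (if S ∩ T = ∅ then (if ∀ i ∈ S, x i = topF j then (1:ℝ) else 0) else 0)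
          = (j:ℝ) ^ (n - S.card) := by
      rw [Finset.sum_congr rfl (fun x _ => if_pos hd), count_cyl]
    rw [hST, hsum, sub_self, mul_zero, mul_zero, hd]
    simp
  · rw [if_neg hd]
    have hsum0 : ∑ x : Fin n → Fin j, (if S ∩ T = ∅ then (if ∀ i ∈ S, x i = topF j then (1:ℝ) else 0) else 0) = 0 := by
      simp [hd]
    rw [hsum0, sub_zero, sub_zero]
    have e1 : (j:ℝ) ^ (n - (S \ T).card) * (j:ℝ) ^ ((S \ T).card) = (j:ℝ) ^ n := by
      rw [← pow_add]
      congr 1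
      omega
    have e2 : ((j:ℝ)⁻¹) ^ S.card * (j:ℝ) ^ (S ∩ T).card
        = ((j:ℝ)⁻¹) ^ (S \ T).card := by
      rw [show S.card = (S \ T).card + (S ∩ T).card from hcard.symm, pow_add, mul_assoc,
        ← mul_pow, inv_mul_cancel₀ hj0, one_pow, mul_one]
    rw [e2, inv_pow]
    have hpn : (j:ℝ)^n ≠ 0 := pow_ne_zero _ hj0
    have hpa : (j:ℝ)^((S \ T).card) ≠ 0 := pow_ne_zero _ hj0
    field_simp
    exact e1
lemma F_eq_sum_gamma [NeZero j] [NeZero k] (hj : 3 ≤ j) (hk : 2 ≤ k) (S T : Finset (Fin n)) :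
    Cfun (wCgame S : (Fin n → Fin j) → Fin k) T
      = ∑ R ∈ S.powerset,
          (((j:ℝ)⁻¹)^S.card * (((j:ℝ)-1)^R.card - (-1:ℝ)^R.card)) * gammaTU R T := by
  rw [CfunW hj hk]
  have h1 : ∑ R ∈ S.powerset,
      (((j:ℝ)⁻¹)^S.card * (((j:ℝ)-1)^R.card - (-1:ℝ)^R.card)) * gammaTU R T
      = ∑ R ∈ (S ∩ T).powerset,
          (((j:ℝ)⁻¹)^S.card * (((j:ℝ)-1)^R.card - (-1:ℝ)^R.card)) := by
    rw [eq_comm]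
    have hps : (S ∩ T).powerset = S.powerset.filter (fun R => R ⊆ T) := by
      ext R
      simp only [Finset.mem_powerset, Finset.mem_filter, Finset.subset_inter_iff]
    rw [hps, Finset.sum_filter]
    refine Finset.sum_congr rfl fun R _ => ?_
    unfold gammaTU
    by_cases h : R ⊆ T <;> simp [h]
  rw [h1, ← Finset.mul_sum, Finset.sum_sub_distrib, sum_pow_powerset, sum_pow_neg_one_real,
    sub_add_cancel]

lemma mobius_fin (g : Finset (Fin n) → ℝ) (T : Finset (Fin n)) :
    g T = ∑ S ∈ T.powerset, ∑ W ∈ S.powerset, (-1:ℝ)^(S.card - W.card) * g W := by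
  rw [Finset.sum_comm' (t' := T.powerset)
    (s' := fun W => T.powerset.filter (fun S => W ⊆ S))]
  · have hinner : ∀ W ∈ T.powerset,
        ∑ S ∈ T.powerset.filter (fun S => W ⊆ S), (-1:ℝ)^(S.card - W.card) * g W
          = (if T \ W = ∅ then 1 else 0) * g W := by
      intro W hW
      rw [Finset.mem_powerset] at hW
      rw [← Finset.sum_mul]
      congr 1
      rw [← sum_pow_neg_one_real (T \ W)]
      refine Finset.sum_bij' (fun S _ => S \ W) (fun X _ => W ∪ X) ?_ ?_ ?_ ?_ ?_
      · intro S hS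
        rw [Finset.mem_filter, Finset.mem_powerset] at hS
        rw [Finset.mem_powerset]
        exact Finset.sdiff_subset_sdiff hS.1 le_rfl
      · intro X hX
        rw [Finset.mem_powerset] at hX
        rw [Finset.mem_filter, Finset.mem_powerset]
        exact ⟨Finset.union_subset hW (hX.trans (Finset.sdiff_subset)), Finset.subset_union_left⟩
      · intro S hS
        rw [Finset.mem_filter, Finset.mem_powerset] at hS
        exact Finset.union_sdiff_of_subset hS.2
      · intro X hX
        rw [Finset.mem_powerset] at hX
        have hdisj : Disjoint W X :=
          Finset.disjoint_left.2 fun a haW haX => (Finset.mem_sdiff.1 (hX haX)).2 haW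
        rw [Finset.union_sdiff_cancel_left hdisj]
      · intro S hS
        rw [Finset.mem_filter, Finset.mem_powerset] at hS
        rw [Finset.card_sdiff_of_subset hS.2]
    rw [Finset.sum_congr rfl hinner]
    have : ∀ W ∈ T.powerset, (if T \ W = ∅ then 1 else 0) * g W
        = (if W = T then g W else 0) := by
      intro W hW
      rw [Finset.mem_powerset] at hW
      by_cases h : W = T
      · subst h
        simp
      · have : ¬ T \ W = ∅ := by
          rw [Finset.sdiff_eq_empty_iff_subset]
          intro hTW
          exact h (Finset.Subset.antisymm hW hTW)
        simp [h, this]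
    rw [Finset.sum_congr rfl this, Finset.sum_ite_eq' T.powerset T g,
      if_pos (Finset.mem_powerset_self T)]
  · intro S W
    simp only [Finset.mem_powerset, Finset.mem_filter]
    constructor
    · rintro ⟨h1, h2⟩
      exact ⟨⟨h1, h2⟩, h2.trans h1⟩
    · rintro ⟨⟨h1, h2⟩, _⟩
      exact ⟨h1, h2⟩

end

theorem stmt17 {n j k : ℕ} [NeZero j] [NeZero k] (hj : 3 ≤ j) (hk : 2 ≤ k)
    (u : (Fin n → Fin j) → Fin k) (hu : IsJKGame u) :
    ∃ x : Finset (Fin n) → ℝ,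
      ∀ T : Finset (Fin n),
        Cfun u T =
          ∑ S : Finset (Fin n), x S * Cfun (wCgame S : (Fin n → Fin j) → Fin k) T := by
  classical
  have hj0 : (j:ℝ) ≠ 0 := by positivity
  set F : Finset (Fin n) → (Finset (Fin n) → ℝ) :=
    fun S => Cfun (wCgame S : (Fin n → Fin j) → Fin k) with hF
  have hgamma : ∀ m : ℕ, ∀ S : Finset (Fin n), S.card ≤ m → S.Nonempty →
      gammaTU S ∈ Submodule.span ℝ (Set.range F) := by
    intro m
    induction m with
    | zero =>
      intro S hS hne
      exfalso
      rw [Nat.le_zero, Finset.card_eq_zero] at hS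
      exact hne.ne_empty hS
    | succ m ih =>
      intro S hS hne
      set c : Finset (Fin n) → ℝ :=
        fun R => ((j:ℝ)⁻¹)^S.card * (((j:ℝ)-1)^R.card - (-1:ℝ)^R.card) with hc
      have hFS : F S = ∑ R ∈ S.powerset, c R • gammaTU R := by
        funext T
        rw [Finset.sum_apply]
        simp only [Pi.smul_apply, smul_eq_mul, hc]
        exact F_eq_sum_gamma hj hk S T
      have hcS : c S ≠ 0 := by
        have hs1 : S.card ≠ 0 := by
          have := hne.card_pos
          omega
        have h2 : (2:ℝ) ≤ (j:ℝ) - 1 := by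
          have : (3:ℝ) ≤ (j:ℝ) := by exact_mod_cast hj
          linarith
        have h3 : (2:ℝ) ≤ ((j:ℝ)-1) ^ S.card := by
          calc (2:ℝ) ≤ 2 ^ S.card := le_self_pow₀ (by norm_num) hs1
          _ ≤ ((j:ℝ)-1) ^ S.card := pow_le_pow_left₀ (by norm_num) h2 S.card
        have h4 : (-1:ℝ)^S.card ≤ 1 := by
          rcases neg_one_pow_eq_one_iff_even (R := ℝ) (by norm_num) |>.2 with _
          rcases Nat.even_or_odd S.card with he | ho
          · rw [he.neg_one_pow]
          · rw [ho.neg_one_pow]; norm_num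
        refine mul_ne_zero (pow_ne_zero _ (inv_ne_zero hj0)) ?_
        have : (0:ℝ) < ((j:ℝ)-1)^S.card - (-1:ℝ)^S.card := by linarith
        exact ne_of_gt this
      rw [← Finset.add_sum_erase _ _ (Finset.mem_powerset_self S)] at hFS
      have hgS : gammaTU S
          = (c S)⁻¹ • (F S - ∑ R ∈ S.powerset.erase S, c R • gammaTU R) := by
        rw [hFS, add_sub_cancel_right, smul_smul, inv_mul_cancel₀ hcS, one_smul]
      rw [hgS]
      refine Submodule.smul_mem _ _ (Submodule.sub_mem _
        (Submodule.subset_span ⟨S, rfl⟩) (Submodule.sum_mem _ fun R hR => ?_))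
      rw [Finset.mem_erase, Finset.mem_powerset] at hR
      by_cases hRe : R = ∅
      · have : c R = 0 := by simp [hc, hRe]
        rw [this, zero_smul]
        exact Submodule.zero_mem _
      · refine Submodule.smul_mem _ _ (ih R ?_ (Finset.nonempty_iff_ne_empty.2 hRe))
        have hlt : R ⊂ S := HasSubset.Subset.ssubset_of_ne hR.2 hR.1
        have := Finset.card_lt_card hlt
        omega
  have hCf0 : Cfun u (∅ : Finset (Fin n)) = 0 := by
    unfold Cfun
    have h1 : ∀ x : Fin n → Fin j, mer ∅ (topF j) x = x := by
      intro x; funext i; simp [mer]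
    have h2 : ∀ x : Fin n → Fin j, mer ∅ (0 : Fin j) x = x := by
      intro x; funext i; simp [mer]
    simp [h1, h2]
  set mco : Finset (Fin n) → ℝ :=
    fun S => ∑ W ∈ S.powerset, (-1:ℝ)^(S.card - W.card) * Cfun u W with hm
  have hCmem : (Cfun u : Finset (Fin n) → ℝ) ∈ Submodule.span ℝ (Set.range F) := by
    have hrep : (Cfun u : Finset (Fin n) → ℝ)
        = ∑ S : Finset (Fin n), mco S • gammaTU S := by
      funext T
      rw [Finset.sum_apply]
      simp only [Pi.smul_apply, smul_eq_mul]
      have h1 : ∑ S : Finset (Fin n), mco S * gammaTU S T = ∑ S ∈ T.powerset, mco S := by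
        rw [eq_comm]
        have hps : T.powerset = (univ : Finset (Finset (Fin n))).filter (fun S => S ⊆ T) := by
          ext S; simp [Finset.mem_powerset]
        rw [hps, Finset.sum_filter]
        refine Finset.sum_congr rfl fun S _ => ?_
        unfold gammaTU
        by_cases h : S ⊆ T <;> simp [h]
      rw [h1]
      exact mobius_fin (Cfun u) T
    rw [hrep]
    refine Submodule.sum_mem _ fun S _ => ?_
    by_cases hS : S = ∅
    · have : mco S = 0 := by
        subst hS
        simp [hm, hCf0]
      rw [this, zero_smul]
      exact Submodule.zero_mem _
    · exact Submodule.smul_mem _ _ (hgamma S.card S le_rfl (Finset.nonempty_iff_ne_empty.2 hS))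
  obtain ⟨x, hx⟩ := (Submodule.mem_span_range_iff_exists_fun ℝ).1 hCmem
  refine ⟨x, fun T => ?_⟩
  rw [← hx, Finset.sum_apply]
  simp only [Pi.smul_apply, smul_eq_mul]
  rfl
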